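/- Finite symmetry generated by P₁ = sin(2t)∂_x + cos(2t)∂_y (Case 10 of Table 1): Suppose the C² triple (u, v, w) solves system (2-23), i.e. u_t + 2y u_x − 2x u_y = d₁(u_xx + u_yy) − uv, v_t + 2y v_x − 2x v_y = d₂(v_xx + v_yy) − uv, w_t + 2y w_x − 2x w_y = d₃(w_xx + w_yy) + uv, on all of ℝ³. Then for every real ε, the triple of functions (t,x,y) ↦ u(t, x + ε·sin 2t, y + ε·cos 2t), (t,x,y) ↦ v(t, x + ε·sin 2t, y + ε·cos 2t), (t,x,y) ↦ w(t, x + ε·sin 2t, y + ε·cos 2t) also solves system (2-23) on ℝ³. -/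

import Mathlib

/-- Partial derivative with respect to `t` of a function of `(t,x,y)`. -/
noncomputable def pdT (f : ℝ × ℝ × ℝ → ℝ) (p : ℝ × ℝ × ℝ) : ℝ := fderiv ℝ f p (1, 0, 0)
/-- Partial derivative with respect to `x`. -/
noncomputable def pdX (f : ℝ × ℝ × ℝ → ℝ) (p : ℝ × ℝ × ℝ) : ℝ := fderiv ℝ f p (0, 1, 0)
/-- Partial derivative with respect to `y`. -/
noncomputable def pdY (f : ℝ × ℝ × ℝ → ℝ) (p : ℝ × ℝ × ℝ) : ℝ := fderiv ℝ f p (0, 0, 1)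

/-- `(u,v,w)` solves system (2-23), the convective Lotka–Volterra system with
stream function `Ψ = x² + y²` and `k = 1`, on `Ω`. -/
def Solves223 (d₁ d₂ d₃ : ℝ) (u v w : ℝ × ℝ × ℝ → ℝ) (Ω : Set (ℝ × ℝ × ℝ)) : Prop :=
  ∀ p ∈ Ω,
    (pdT u p + 2 * p.2.2 * pdX u p - 2 * p.2.1 * pdY u p
      = d₁ * (pdX (pdX u) p + pdY (pdY u) p) - u p * v p) ∧
    (pdT v p + 2 * p.2.2 * pdX v p - 2 * p.2.1 * pdY v p
      = d₂ * (pdX (pdX v) p + pdY (pdY v) p) - u p * v p) ∧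
    (pdT w p + 2 * p.2.2 * pdX w p - 2 * p.2.1 * pdY w p
      = d₃ * (pdX (pdX w) p + pdY (pdY w) p) + u p * v p)

namespace P1aux

lemma hasFDerivAt_shift (ε : ℝ) (p : ℝ × ℝ × ℝ) :
    ∃ L : (ℝ × ℝ × ℝ) →L[ℝ] (ℝ × ℝ × ℝ),
      HasFDerivAt (fun q : ℝ × ℝ × ℝ =>
        ((q.1, q.2.1 + ε * Real.sin (2 * q.1), q.2.2 + ε * Real.cos (2 * q.1)) : ℝ × ℝ × ℝ)) L p ∧
      L (1,0,0) = (1, 2*ε*Real.cos (2*p.1), -(2*ε*Real.sin (2*p.1))) ∧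
      L (0,1,0) = (0,1,0) ∧ L (0,0,1) = (0,0,1) := by
  set A : (ℝ × ℝ × ℝ) →L[ℝ] ℝ := ContinuousLinearMap.fst ℝ ℝ (ℝ × ℝ)
  set B : (ℝ × ℝ × ℝ) →L[ℝ] ℝ :=
    (ContinuousLinearMap.fst ℝ ℝ ℝ).comp (ContinuousLinearMap.snd ℝ ℝ (ℝ × ℝ))
  set C : (ℝ × ℝ × ℝ) →L[ℝ] ℝ :=
    (ContinuousLinearMap.snd ℝ ℝ ℝ).comp (ContinuousLinearMap.snd ℝ ℝ (ℝ × ℝ))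
  refine ⟨A.prod ((B + (2*ε*Real.cos (2*p.1)) • A).prod (C + (-(2*ε*Real.sin (2*p.1))) • A)),
    ?_, ?_, ?_, ?_⟩
  · have h2t : HasDerivAt (fun t : ℝ => 2 * t) 2 p.1 := by
      simpa using (hasDerivAt_id p.1).const_mul 2
    have hsin : HasDerivAt (fun t : ℝ => ε * Real.sin (2 * t)) (2*ε*Real.cos (2*p.1)) p.1 := by
      have := ((Real.hasDerivAt_sin (2*p.1)).comp p.1 h2t).const_mul ε
      rw [show (2*ε*Real.cos (2*p.1)) = ε * (Real.cos (2 * p.1) * 2) by ring]; exact this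
    have hcos : HasDerivAt (fun t : ℝ => ε * Real.cos (2 * t)) (-(2*ε*Real.sin (2*p.1))) p.1 := by
      have := ((Real.hasDerivAt_cos (2*p.1)).comp p.1 h2t).const_mul ε
      rw [show (-(2*ε*Real.sin (2*p.1))) = ε * (-Real.sin (2 * p.1) * 2) by ring]; exact this
    have hA : HasFDerivAt (fun q : ℝ × ℝ × ℝ => q.1) A p := hasFDerivAt_fst
    have hB : HasFDerivAt (fun q : ℝ × ℝ × ℝ => q.2.1) B p :=
      hasFDerivAt_fst.comp p hasFDerivAt_snd
    have hC : HasFDerivAt (fun q : ℝ × ℝ × ℝ => q.2.2) C p :=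
      hasFDerivAt_snd.comp p hasFDerivAt_snd
    have hsinF : HasFDerivAt (fun q : ℝ × ℝ × ℝ => ε * Real.sin (2 * q.1))
        ((2*ε*Real.cos (2*p.1)) • A) p := hsin.comp_hasFDerivAt p hA
    have hcosF : HasFDerivAt (fun q : ℝ × ℝ × ℝ => ε * Real.cos (2 * q.1))
        ((-(2*ε*Real.sin (2*p.1))) • A) p := hcos.comp_hasFDerivAt p hA
    exact HasFDerivAt.prodMk hA (HasFDerivAt.prodMk (hB.add hsinF) (hC.add hcosF))
  · simp [A, B, C]
  · simp [A, B, C]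
  · simp [A, B, C]

lemma pd_comp (ε : ℝ) (f : ℝ × ℝ × ℝ → ℝ) (hf : Differentiable ℝ f) (p : ℝ × ℝ × ℝ) :
    (pdT (fun q => f (q.1, q.2.1 + ε * Real.sin (2 * q.1), q.2.2 + ε * Real.cos (2 * q.1))) p
      = pdT f (p.1, p.2.1 + ε * Real.sin (2 * p.1), p.2.2 + ε * Real.cos (2 * p.1))
        + 2*ε*Real.cos (2*p.1) * pdX f (p.1, p.2.1 + ε * Real.sin (2 * p.1), p.2.2 + ε * Real.cos (2 * p.1))
        - 2*ε*Real.sin (2*p.1) * pdY f (p.1, p.2.1 + ε * Real.sin (2 * p.1), p.2.2 + ε * Real.cos (2 * p.1))) ∧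
    (pdX (fun q => f (q.1, q.2.1 + ε * Real.sin (2 * q.1), q.2.2 + ε * Real.cos (2 * q.1))) p
      = pdX f (p.1, p.2.1 + ε * Real.sin (2 * p.1), p.2.2 + ε * Real.cos (2 * p.1))) ∧
    (pdY (fun q => f (q.1, q.2.1 + ε * Real.sin (2 * q.1), q.2.2 + ε * Real.cos (2 * q.1))) p
      = pdY f (p.1, p.2.1 + ε * Real.sin (2 * p.1), p.2.2 + ε * Real.cos (2 * p.1))) := by
  obtain ⟨L, hL, h1, h2, h3⟩ := hasFDerivAt_shift ε p
  set q : ℝ × ℝ × ℝ := (p.1, p.2.1 + ε * Real.sin (2 * p.1), p.2.2 + ε * Real.cos (2 * p.1)) with hq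
  have hcomp : HasFDerivAt
      (fun q : ℝ × ℝ × ℝ => f (q.1, q.2.1 + ε * Real.sin (2 * q.1), q.2.2 + ε * Real.cos (2 * q.1)))
      ((fderiv ℝ f q).comp L) p := (hf q).hasFDerivAt.comp p hL
  have hfd := hcomp.fderiv
  have hdec : ((1 : ℝ), 2*ε*Real.cos (2*p.1), -(2*ε*Real.sin (2*p.1)))
      = ((1:ℝ),(0:ℝ),(0:ℝ)) + (2*ε*Real.cos (2*p.1)) • ((0:ℝ),(1:ℝ),(0:ℝ))
        + (-(2*ε*Real.sin (2*p.1))) • ((0:ℝ),(0:ℝ),(1:ℝ)) := by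
    simp [Prod.ext_iff]
  refine ⟨?_, ?_, ?_⟩
  · show fderiv ℝ _ p (1,0,0) = _
    rw [hfd]
    simp only [ContinuousLinearMap.comp_apply, h1, hdec, map_add, map_smul]
    simp only [pdT, pdX, pdY, smul_eq_mul]
    ring
  · show fderiv ℝ _ p (0,1,0) = _
    rw [hfd]
    simp only [ContinuousLinearMap.comp_apply, h2]
    rfl
  · show fderiv ℝ _ p (0,0,1) = _
    rw [hfd]
    simp only [ContinuousLinearMap.comp_apply, h3]
    rfl

lemma diff_pdX (f : ℝ × ℝ × ℝ → ℝ) (hf : ContDiff ℝ 2 f) : Differentiable ℝ (pdX f) := by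
  have h1 : ContDiff ℝ 1 (fderiv ℝ f) := hf.fderiv_right (by norm_num)
  exact (h1.differentiable one_ne_zero).clm_apply (differentiable_const _)

lemma diff_pdY (f : ℝ × ℝ × ℝ → ℝ) (hf : ContDiff ℝ 2 f) : Differentiable ℝ (pdY f) := by
  have h1 : ContDiff ℝ 1 (fderiv ℝ f) := hf.fderiv_right (by norm_num)
  exact (h1.differentiable one_ne_zero).clm_apply (differentiable_const _)

lemma pdXX_comp (ε : ℝ) (f : ℝ × ℝ × ℝ → ℝ) (hf : ContDiff ℝ 2 f) (p : ℝ × ℝ × ℝ) :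
    pdX (pdX (fun q => f (q.1, q.2.1 + ε * Real.sin (2 * q.1), q.2.2 + ε * Real.cos (2 * q.1)))) p
      = pdX (pdX f) (p.1, p.2.1 + ε * Real.sin (2 * p.1), p.2.2 + ε * Real.cos (2 * p.1)) := by
  have hrw : pdX (fun q => f (q.1, q.2.1 + ε * Real.sin (2 * q.1), q.2.2 + ε * Real.cos (2 * q.1)))
      = fun q => (pdX f) (q.1, q.2.1 + ε * Real.sin (2 * q.1), q.2.2 + ε * Real.cos (2 * q.1)) :=
    funext fun q => (pd_comp ε f (hf.differentiable (by norm_num)) q).2.1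
  rw [hrw]
  exact (pd_comp ε (pdX f) (diff_pdX f hf) p).2.1

lemma pdYY_comp (ε : ℝ) (f : ℝ × ℝ × ℝ → ℝ) (hf : ContDiff ℝ 2 f) (p : ℝ × ℝ × ℝ) :
    pdY (pdY (fun q => f (q.1, q.2.1 + ε * Real.sin (2 * q.1), q.2.2 + ε * Real.cos (2 * q.1)))) p
      = pdY (pdY f) (p.1, p.2.1 + ε * Real.sin (2 * p.1), p.2.2 + ε * Real.cos (2 * p.1)) := by
  have hrw : pdY (fun q => f (q.1, q.2.1 + ε * Real.sin (2 * q.1), q.2.2 + ε * Real.cos (2 * q.1)))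
      = fun q => (pdY f) (q.1, q.2.1 + ε * Real.sin (2 * q.1), q.2.2 + ε * Real.cos (2 * q.1)) :=
    funext fun q => (pd_comp ε f (hf.differentiable (by norm_num)) q).2.2
  rw [hrw]
  exact (pd_comp ε (pdY f) (diff_pdY f hf) p).2.2

end P1aux

/-- Finite symmetry generated by `P₁ = sin(2t)∂_x + cos(2t)∂_y` (Case 10 of Table 1):
if `(u,v,w)` solves system (2-23) on `ℝ³`, then for every real `ε` the shifted triple
`(t,x,y) ↦ (u,v,w)(t, x + ε sin 2t, y + ε cos 2t)` also solves (2-23) on `ℝ³`. -/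
theorem finite_symmetry_P1
    (d₁ d₂ d₃ : ℝ) (u v w : ℝ × ℝ × ℝ → ℝ)
    (hu : ContDiff ℝ 2 u) (hv : ContDiff ℝ 2 v) (hw : ContDiff ℝ 2 w)
    (h : Solves223 d₁ d₂ d₃ u v w Set.univ) :
    ∀ ε : ℝ,
      Solves223 d₁ d₂ d₃
        (fun p => u (p.1, p.2.1 + ε * Real.sin (2 * p.1), p.2.2 + ε * Real.cos (2 * p.1)))
        (fun p => v (p.1, p.2.1 + ε * Real.sin (2 * p.1), p.2.2 + ε * Real.cos (2 * p.1)))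
        (fun p => w (p.1, p.2.1 + ε * Real.sin (2 * p.1), p.2.2 + ε * Real.cos (2 * p.1)))
        Set.univ := by
  intro ε p _
  set q : ℝ × ℝ × ℝ := (p.1, p.2.1 + ε * Real.sin (2 * p.1), p.2.2 + ε * Real.cos (2 * p.1)) with hq
  obtain ⟨h1, h2, h3⟩ := h q (Set.mem_univ q)
  obtain ⟨hTu, hXu, hYu⟩ := P1aux.pd_comp ε u (hu.differentiable (by norm_num)) p
  obtain ⟨hTv, hXv, hYv⟩ := P1aux.pd_comp ε v (hv.differentiable (by norm_num)) p
  obtain ⟨hTw, hXw, hYw⟩ := P1aux.pd_comp ε w (hw.differentiable (by norm_num)) p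
  have hXXu := P1aux.pdXX_comp ε u hu p
  have hYYu := P1aux.pdYY_comp ε u hu p
  have hXXv := P1aux.pdXX_comp ε v hv p
  have hYYv := P1aux.pdYY_comp ε v hv p
  have hXXw := P1aux.pdXX_comp ε w hw p
  have hYYw := P1aux.pdYY_comp ε w hw p
  have hq1 : q.2.1 = p.2.1 + ε * Real.sin (2 * p.1) := by rw [hq]
  have hq2 : q.2.2 = p.2.2 + ε * Real.cos (2 * p.1) := by rw [hq]
  refine ⟨?_, ?_, ?_⟩
  · rw [hTu, hXu, hYu, hXXu, hYYu, ← hq]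
    rw [hq1, hq2] at h1
    linarith [h1]
  · rw [hTv, hXv, hYv, hXXv, hYYv, ← hq]
    rw [hq1, hq2] at h2
    linarith [h2]
  · rw [hTw, hXw, hYw, hXXw, hYYw, ← hq]
    rw [hq1, hq2] at h3
    linarith [h3]
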